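/- For all integers k₁, ℓ₁, k₂, ℓ₂ ≥ 1 and all real parameters α, β, γ, the covariance of the spatial autoregressive process satisfies Cov(X_{k₁,ℓ₁}, X_{k₂,ℓ₂}) = Σ_{i=1}^{min(k₁,k₂)} Σ_{j=1}^{min(ℓ₁,ℓ₂)} G(k₁−i, ℓ₁−j; α, β, γ) · G(k₂−i, ℓ₂−j; α, β, γ). -/

import Mathlib

open MeasureTheory ProbabilityTheory Filter

/-- `G m n α β γ = Σ_{r=0}^{min(m,n)} ((m+n−r)!/((m−r)!(n−r)!r!)) α^{m−r} β^{n−r} γ^r`. -/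
noncomputable def G (m n : ℕ) (α β γ : ℝ) : ℝ :=
  ∑ r ∈ Finset.range (min m n + 1),
    ((Nat.factorial (m + n - r) : ℝ) /
      ((Nat.factorial (m - r) : ℝ) * (Nat.factorial (n - r) : ℝ) * (Nat.factorial r : ℝ))) *
      α ^ (m - r) * β ^ (n - r) * γ ^ r

/-- The covariance of two real random variables. -/
noncomputable def cov {Ω : Type*} [MeasurableSpace Ω] (P : Measure Ω) (X Y : Ω → ℝ) : ℝ :=
  ∫ ω, (X ω - ∫ x, X x ∂P) * (Y ω - ∫ x, Y x ∂P) ∂P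

lemma G_right (m : ℕ) (α β γ : ℝ) : G m 0 α β γ = α ^ m := by
  simp [G, Nat.factorial,
    div_self (Nat.cast_ne_zero.mpr (Nat.factorial_ne_zero m) : ((Nat.factorial m : ℝ) ≠ 0))]

lemma G_left (n : ℕ) (α β γ : ℝ) : G 0 n α β γ = β ^ n := by
  simp [G, Nat.factorial,
    div_self (Nat.cast_ne_zero.mpr (Nat.factorial_ne_zero n) : ((Nat.factorial n : ℝ) ≠ 0))]

lemma G_symm (m n : ℕ) (α β γ : ℝ) : G m n α β γ = G n m β α γ := by
  unfold G
  rw [min_comm]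
  refine Finset.sum_congr rfl fun r _ => ?_
  rw [add_comm n m]
  ring

lemma hfacR : ∀ x : ℕ, ((Nat.factorial x : ℝ)) ≠ 0 :=
  fun x => Nat.cast_ne_zero.mpr (Nat.factorial_ne_zero x)

lemma G_rec_le (m n : ℕ) (h : m ≤ n) (α β γ : ℝ) :
    G (m+1) (n+1) α β γ = α * G m (n+1) α β γ + β * G (m+1) n α β γ + γ * G m n α β γ := by
  classical
  set F : ℕ → ℝ := fun r => ((Nat.factorial (m + 1 + (n + 1) - r) : ℝ) /
      ((Nat.factorial (m + 1 - r) : ℝ) * (Nat.factorial (n + 1 - r) : ℝ) * (Nat.factorial r : ℝ))) *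
      α ^ (m + 1 - r) * β ^ (n + 1 - r) * γ ^ r with hF
  set Fa : ℕ → ℝ := fun r => ((Nat.factorial (m + (n + 1) - r) : ℝ) /
      ((Nat.factorial (m - r) : ℝ) * (Nat.factorial (n + 1 - r) : ℝ) * (Nat.factorial r : ℝ))) *
      α ^ (m - r) * β ^ (n + 1 - r) * γ ^ r with hFa
  set Fb : ℕ → ℝ := fun r => ((Nat.factorial (m + 1 + n - r) : ℝ) /
      ((Nat.factorial (m + 1 - r) : ℝ) * (Nat.factorial (n - r) : ℝ) * (Nat.factorial r : ℝ))) *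
      α ^ (m + 1 - r) * β ^ (n - r) * γ ^ r with hFb
  set E : ℕ → ℝ := fun r => (r : ℝ) * ((Nat.factorial (m + n + 1 - r) : ℝ) /
      ((Nat.factorial (m + 1 - r) : ℝ) * (Nat.factorial (n + 1 - r) : ℝ) * (Nat.factorial r : ℝ))) *
      α ^ (m + 1 - r) * β ^ (n + 1 - r) * γ ^ r with hE
  have hγsum : γ * G m n α β γ = ∑ r ∈ Finset.range (m + 2), E r := by
    unfold G
    rw [min_eq_left h, Finset.mul_sum, Finset.sum_range_succ' E (m + 1)]
    have hE0 : E 0 = 0 := by simp [hE]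
    rw [hE0, add_zero]
    refine Finset.sum_congr rfl fun r hr => ?_
    simp only [hE]
    have e1 : m + n + 1 - (r + 1) = m + n - r := by omega
    have e2 : m + 1 - (r + 1) = m - r := by omega
    have e3 : n + 1 - (r + 1) = n - r := by omega
    rw [e1, e2, e3, Nat.factorial_succ]
    push_cast
    field_simp
    ring
  have hcore : ∀ r, r ≤ m → F r = α * Fa r + β * Fb r + E r := by
    intro r hr
    obtain ⟨a, rfl⟩ : ∃ a, m = r + a := ⟨m - r, by omega⟩
    obtain ⟨b, rfl⟩ : ∃ b, n = r + a + b := ⟨n - (r + a), by omega⟩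
    simp only [hF, hFa, hFb, hE]
    have e1 : r + a + 1 + (r + a + b + 1) - r = (r + 2 * a + b + 1) + 1 := by omega
    have e2 : r + a + 1 - r = a + 1 := by omega
    have e3 : r + a + b + 1 - r = a + b + 1 := by omega
    have e4 : r + a + (r + a + b + 1) - r = r + 2 * a + b + 1 := by omega
    have e5 : r + a - r = a := by omega
    have e6 : r + a + 1 + (r + a + b) - r = r + 2 * a + b + 1 := by omega
    have e7 : r + a + b - r = a + b := by omega
    have e8 : r + a + (r + a + b) + 1 - r = r + 2 * a + b + 1 := by omega
    rw [e1, e2, e3, e4, e5, e6, e7, e8, Nat.factorial_succ (r + 2 * a + b + 1),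
      Nat.factorial_succ (a + b), Nat.factorial_succ a]
    push_cast
    field_simp
    ring
  have hmin1 : min (m + 1) (n + 1) = m + 1 := min_eq_left (by omega)
  have hmin2 : min m (n + 1) = m := min_eq_left (by omega)
  have hGL : G (m+1) (n+1) α β γ = ∑ r ∈ Finset.range (m + 2), F r := by
    unfold G; rw [hmin1]
  have hGa : α * G m (n+1) α β γ = ∑ r ∈ Finset.range (m + 1), α * Fa r := by
    unfold G; rw [hmin2, Finset.mul_sum]
  rcases eq_or_lt_of_le h with rfl | hlt
  · -- m = n
    have hminb : min (m + 1) m = m := min_eq_right (by omega)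
    have hGb : β * G (m+1) m α β γ = ∑ r ∈ Finset.range (m + 1), β * Fb r := by
      unfold G; rw [hminb, Finset.mul_sum]
    have htop : F (m + 1) = E (m + 1) := by
      simp only [hF, hE]
      have e1 : m + 1 + (m + 1) - (m + 1) = m + 1 := by omega
      have e2 : m + 1 - (m + 1) = 0 := by omega
      have e3 : m + m + 1 - (m + 1) = m := by omega
      rw [e1, e2, e3, Nat.factorial_succ m]
      push_cast
      field_simp
    rw [hGL, hGa, hGb, hγsum, Finset.sum_range_succ F (m + 1),
      Finset.sum_range_succ E (m + 1), htop,
      Finset.sum_congr rfl (fun r hr => hcore r (by simpa using Nat.lt_succ_iff.mp (Finset.mem_range.mp hr)))]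
    rw [Finset.sum_add_distrib, Finset.sum_add_distrib]
    ring
  · -- m < n
    have hminb : min (m + 1) n = m + 1 := min_eq_left (by omega)
    have hGb : β * G (m+1) n α β γ = ∑ r ∈ Finset.range (m + 2), β * Fb r := by
      unfold G; rw [hminb, Finset.mul_sum]
    have htop : F (m + 1) = β * Fb (m + 1) + E (m + 1) := by
      simp only [hF, hFb, hE]
      obtain ⟨t, rfl⟩ : ∃ t, n = m + 1 + t := ⟨n - (m + 1), by omega⟩
      have e1 : m + 1 + (m + 1 + t + 1) - (m + 1) = (m + t + 1) + 1 := by omega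
      have e2 : m + 1 - (m + 1) = 0 := by omega
      have e3 : m + 1 + t + 1 - (m + 1) = t + 1 := by omega
      have e4 : m + 1 + (m + 1 + t) - (m + 1) = m + t + 1 := by omega
      have e5 : m + 1 + t - (m + 1) = t := by omega
      have e6 : m + (m + 1 + t) + 1 - (m + 1) = m + t + 1 := by omega
      rw [e1, e2, e3, e4, e5, e6, Nat.factorial_succ (m + t + 1), Nat.factorial_succ t]
      push_cast
      field_simp
      ring
    rw [hGL, hGa, hGb, hγsum, Finset.sum_range_succ F (m + 1),
      Finset.sum_range_succ E (m + 1), Finset.sum_range_succ (fun r => β * Fb r) (m + 1), htop,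
      Finset.sum_congr rfl (fun r hr => hcore r (by simpa using Nat.lt_succ_iff.mp (Finset.mem_range.mp hr)))]
    rw [Finset.sum_add_distrib, Finset.sum_add_distrib]
    ring

lemma G_rec (m n : ℕ) (α β γ : ℝ) :
    G (m+1) (n+1) α β γ = α * G m (n+1) α β γ + β * G (m+1) n α β γ + γ * G m n α β γ := by
  rcases le_total m n with h | h
  · exact G_rec_le m n h α β γ
  · rw [G_symm (m+1) (n+1), G_symm m (n+1), G_symm (m+1) n, G_symm m n, G_rec_le n m h β α γ]
    ring

lemma repr_lemma {Ω : Type*} (ε : ℕ → ℕ → Ω → ℝ) (α β γ : ℝ) (X : ℕ → ℕ → Ω → ℝ)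
    (hrec : ∀ k ℓ : ℕ, 1 ≤ k → 1 ≤ ℓ → ∀ ω : Ω,
      X k ℓ ω = α * X (k - 1) ℓ ω + β * X k (ℓ - 1) ω + γ * X (k - 1) (ℓ - 1) ω + ε k ℓ ω)
    (hbd1 : ∀ k : ℕ, ∀ ω : Ω, X k 0 ω = 0)
    (hbd2 : ∀ ℓ : ℕ, ∀ ω : Ω, X 0 ℓ ω = 0) :
    ∀ k ℓ : ℕ, ∀ ω : Ω, X k ℓ ω =
      ∑ i ∈ Finset.Icc 1 k, ∑ j ∈ Finset.Icc 1 ℓ, G (k - i) (ℓ - j) α β γ * ε i j ω := by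
  have main : ∀ N k ℓ : ℕ, k + ℓ ≤ N → ∀ ω : Ω, X k ℓ ω =
      ∑ i ∈ Finset.Icc 1 k, ∑ j ∈ Finset.Icc 1 ℓ, G (k - i) (ℓ - j) α β γ * ε i j ω := by
    intro N
    induction N with
    | zero =>
      intro k ℓ hkl ω
      have hk : k = 0 := by omega
      subst hk
      simp [hbd2]
    | succ N ih =>
      intro k ℓ hkl ω
      match k, ℓ with
      | 0, ℓ => simp [hbd2]
      | (k' + 1), 0 => simp [hbd1]
      | (k' + 1), (ℓ' + 1) =>
        rw [hrec (k' + 1) (ℓ' + 1) (by omega) (by omega) ω]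
        simp only [Nat.add_sub_cancel]
        rw [ih k' (ℓ' + 1) (by omega), ih (k' + 1) ℓ' (by omega), ih k' ℓ' (by omega)]
        have hmain : ∑ i ∈ Finset.Icc 1 k', ∑ j ∈ Finset.Icc 1 ℓ',
              G (k' + 1 - i) (ℓ' + 1 - j) α β γ * ε i j ω
            = α * (∑ i ∈ Finset.Icc 1 k', ∑ j ∈ Finset.Icc 1 ℓ',
                G (k' - i) (ℓ' + 1 - j) α β γ * ε i j ω)
              + β * (∑ i ∈ Finset.Icc 1 k', ∑ j ∈ Finset.Icc 1 ℓ',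
                G (k' + 1 - i) (ℓ' - j) α β γ * ε i j ω)
              + γ * (∑ i ∈ Finset.Icc 1 k', ∑ j ∈ Finset.Icc 1 ℓ',
                G (k' - i) (ℓ' - j) α β γ * ε i j ω) := by
          rw [Finset.mul_sum, Finset.mul_sum, Finset.mul_sum, ← Finset.sum_add_distrib,
            ← Finset.sum_add_distrib]
          refine Finset.sum_congr rfl fun i hi => ?_
          rw [Finset.mul_sum, Finset.mul_sum, Finset.mul_sum, ← Finset.sum_add_distrib,
            ← Finset.sum_add_distrib]
          refine Finset.sum_congr rfl fun j hj => ?_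
          obtain ⟨hi1, hi2⟩ := Finset.mem_Icc.mp hi
          obtain ⟨hj1, hj2⟩ := Finset.mem_Icc.mp hj
          have e1 : k' + 1 - i = (k' - i) + 1 := by omega
          have e2 : ℓ' + 1 - j = (ℓ' - j) + 1 := by omega
          rw [e1, e2, G_rec, ← e1, ← e2]
          ring
        have hbB : ∑ i ∈ Finset.Icc 1 k', G (k' + 1 - i) 0 α β γ * ε i (ℓ' + 1) ω
            = α * ∑ i ∈ Finset.Icc 1 k', G (k' - i) 0 α β γ * ε i (ℓ' + 1) ω := by
          rw [Finset.mul_sum]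
          refine Finset.sum_congr rfl fun i hi => ?_
          obtain ⟨hi1, hi2⟩ := Finset.mem_Icc.mp hi
          have e1 : k' + 1 - i = (k' - i) + 1 := by omega
          rw [G_right, G_right, e1, pow_succ]
          ring
        have hbC : ∑ j ∈ Finset.Icc 1 ℓ', G 0 (ℓ' + 1 - j) α β γ * ε (k' + 1) j ω
            = β * ∑ j ∈ Finset.Icc 1 ℓ', G 0 (ℓ' - j) α β γ * ε (k' + 1) j ω := by
          rw [Finset.mul_sum]
          refine Finset.sum_congr rfl fun j hj => ?_
          obtain ⟨hj1, hj2⟩ := Finset.mem_Icc.mp hj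
          have e2 : ℓ' + 1 - j = (ℓ' - j) + 1 := by omega
          rw [G_left, G_left, e2, pow_succ]
          ring
        have hbD : G 0 0 α β γ = 1 := by
          have := G_right 0 α β γ; simpa using this
        simp only [Finset.sum_Icc_succ_top (show (1:ℕ) ≤ ℓ' + 1 by omega),
          Finset.sum_Icc_succ_top (show (1:ℕ) ≤ k' + 1 by omega), Nat.sub_self,
          Finset.sum_add_distrib, mul_add]
        rw [hmain, hbB, hbC, hbD]
        ring
  intro k ℓ ω
  exact main (k + ℓ) k ℓ le_rfl ω


theorem covariance_representation
    {Ω : Type*} [MeasurableSpace Ω] (P : Measure Ω) [IsProbabilityMeasure P]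
    (ε : ℕ → ℕ → Ω → ℝ)
    (hmeas : ∀ k ℓ : ℕ, Measurable (ε k ℓ))
    (hindep : iIndepFun
      (fun p : {p : ℕ × ℕ // 1 ≤ p.1 ∧ 1 ≤ p.2} => ε p.1.1 p.1.2) P)
    (hmean : ∀ k ℓ : ℕ, 1 ≤ k → 1 ≤ ℓ → ∫ ω, ε k ℓ ω ∂P = 0)
    (hvar : ∀ k ℓ : ℕ, 1 ≤ k → 1 ≤ ℓ → variance (ε k ℓ) P = 1)
    (α β γ : ℝ)
    (X : ℕ → ℕ → Ω → ℝ)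
    (hrec : ∀ k ℓ : ℕ, 1 ≤ k → 1 ≤ ℓ → ∀ ω : Ω,
      X k ℓ ω = α * X (k - 1) ℓ ω + β * X k (ℓ - 1) ω + γ * X (k - 1) (ℓ - 1) ω + ε k ℓ ω)
    (hbd1 : ∀ k : ℕ, ∀ ω : Ω, X k 0 ω = 0)
    (hbd2 : ∀ ℓ : ℕ, ∀ ω : Ω, X 0 ℓ ω = 0) :
    ∀ k₁ ℓ₁ k₂ ℓ₂ : ℕ, 1 ≤ k₁ → 1 ≤ ℓ₁ → 1 ≤ k₂ → 1 ≤ ℓ₂ →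
      cov P (X k₁ ℓ₁) (X k₂ ℓ₂) =
        ∑ i ∈ Finset.Icc 1 (min k₁ k₂), ∑ j ∈ Finset.Icc 1 (min ℓ₁ ℓ₂),
          G (k₁ - i) (ℓ₁ - j) α β γ * G (k₂ - i) (ℓ₂ - j) α β γ := by
  classical
  -- each ε is in L²
  have hL2 : ∀ k ℓ : ℕ, 1 ≤ k → 1 ≤ ℓ → MemLp (ε k ℓ) 2 P := by
    intro k ℓ hk hℓ
    rw [← evariance_lt_top_iff_memLp (hmeas k ℓ).aestronglyMeasurable]
    by_contra hcon
    have htop : evariance (ε k ℓ) P = ⊤ := by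
      rw [← top_le_iff]; exact not_lt.mp hcon
    have h1 := hvar k ℓ hk hℓ
    rw [ProbabilityTheory.variance, htop] at h1
    norm_num at h1
  have hint : ∀ k ℓ : ℕ, 1 ≤ k → 1 ≤ ℓ → Integrable (ε k ℓ) P :=
    fun k ℓ hk hℓ => (hL2 k ℓ hk hℓ).integrable (by norm_num)
  have hprodint : ∀ p q : ℕ × ℕ, 1 ≤ p.1 → 1 ≤ p.2 → 1 ≤ q.1 → 1 ≤ q.2 →
      Integrable (fun ω => ε p.1 p.2 ω * ε q.1 q.2 ω) P := by
    intro p q hp1 hp2 hq1 hq2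
    have hsmul : MemLp ((ε p.1 p.2) • (ε q.1 q.2)) 1 P :=
      (hL2 q.1 q.2 hq1 hq2).smul (hL2 p.1 p.2 hp1 hp2)
    have := memLp_one_iff_integrable.mp hsmul
    exact this
  -- second moments
  have hεε : ∀ p q : ℕ × ℕ, 1 ≤ p.1 → 1 ≤ p.2 → 1 ≤ q.1 → 1 ≤ q.2 →
      ∫ ω, ε p.1 p.2 ω * ε q.1 q.2 ω ∂P = if p = q then 1 else 0 := by
    intro p q hp1 hp2 hq1 hq2
    by_cases h : p = q
    · subst h
      rw [if_pos rfl]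
      have hv := hvar p.1 p.2 hp1 hp2
      have hdef := ProbabilityTheory.variance_eq_sub (hL2 p.1 p.2 hp1 hp2)
      rw [hv, hmean p.1 p.2 hp1 hp2] at hdef
      have h2 : ∫ ω, (ε p.1 p.2 ω) ^ 2 ∂P = 1 := by
        have h2' : ∫ ω, (ε p.1 p.2 ^ 2) ω ∂P = 1 := by
          rw [hdef]; ring
        simpa [Pi.pow_apply] using h2'
      rw [← h2]
      congr 1
      funext ω
      ring
    · rw [if_neg h]
      have hne : (⟨p, ⟨hp1, hp2⟩⟩ : {p : ℕ × ℕ // 1 ≤ p.1 ∧ 1 ≤ p.2}) ≠ ⟨q, ⟨hq1, hq2⟩⟩ := by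
        simp only [ne_eq, Subtype.mk.injEq]
        exact h
      have hind : IndepFun (ε p.1 p.2) (ε q.1 q.2) P := hindep.indepFun hne
      have := hind.integral_mul_eq_mul_integral (hmeas p.1 p.2).aestronglyMeasurable
        (hmeas q.1 q.2).aestronglyMeasurable
      rw [hmean p.1 p.2 hp1 hp2, hmean q.1 q.2 hq1 hq2, mul_zero] at this
      simpa [Pi.mul_apply] using this
  intro k₁ ℓ₁ k₂ ℓ₂ hk₁ hℓ₁ hk₂ hℓ₂
  have hXrep := repr_lemma ε α β γ X hrec hbd1 hbd2
  set T₁ : Finset (ℕ × ℕ) := (Finset.Icc 1 k₁) ×ˢ (Finset.Icc 1 ℓ₁) with hT₁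
  set T₂ : Finset (ℕ × ℕ) := (Finset.Icc 1 k₂) ×ˢ (Finset.Icc 1 ℓ₂) with hT₂
  set a : ℕ × ℕ → ℝ := fun p => G (k₁ - p.1) (ℓ₁ - p.2) α β γ with ha
  set b : ℕ × ℕ → ℝ := fun p => G (k₂ - p.1) (ℓ₂ - p.2) α β γ with hb
  have hmemT₁ : ∀ p ∈ T₁, 1 ≤ p.1 ∧ 1 ≤ p.2 := by
    intro p hp
    rw [hT₁, Finset.mem_product, Finset.mem_Icc, Finset.mem_Icc] at hp
    exact ⟨hp.1.1, hp.2.1⟩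
  have hmemT₂ : ∀ p ∈ T₂, 1 ≤ p.1 ∧ 1 ≤ p.2 := by
    intro p hp
    rw [hT₂, Finset.mem_product, Finset.mem_Icc, Finset.mem_Icc] at hp
    exact ⟨hp.1.1, hp.2.1⟩
  have hf1 : X k₁ ℓ₁ = fun ω => ∑ p ∈ T₁, a p * ε p.1 p.2 ω := by
    funext ω
    rw [hXrep k₁ ℓ₁ ω, hT₁, Finset.sum_product]
  have hf2 : X k₂ ℓ₂ = fun ω => ∑ p ∈ T₂, b p * ε p.1 p.2 ω := by
    funext ω
    rw [hXrep k₂ ℓ₂ ω, hT₂, Finset.sum_product]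
  have hmint : ∀ (T : Finset (ℕ × ℕ)) (c : ℕ × ℕ → ℝ), (∀ p ∈ T, 1 ≤ p.1 ∧ 1 ≤ p.2) →
      ∫ ω, ∑ p ∈ T, c p * ε p.1 p.2 ω ∂P = 0 := by
    intro T c hT
    rw [integral_finset_sum T
      (fun p hp => ((hint p.1 p.2 (hT p hp).1 (hT p hp).2).const_mul (c p)))]
    refine Finset.sum_eq_zero fun p hp => ?_
    rw [integral_const_mul, hmean p.1 p.2 (hT p hp).1 (hT p hp).2, mul_zero]
  have hm1 : ∫ x, X k₁ ℓ₁ x ∂P = 0 := by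
    rw [hf1]; exact hmint T₁ a hmemT₁
  have hm2 : ∫ x, X k₂ ℓ₂ x ∂P = 0 := by
    rw [hf2]; exact hmint T₂ b hmemT₂
  rw [cov, hm1, hm2]
  simp only [sub_zero]
  have hptwise : ∀ ω : Ω, X k₁ ℓ₁ ω * X k₂ ℓ₂ ω =
      ∑ p ∈ T₁, ∑ q ∈ T₂, (a p * b q) * (ε p.1 p.2 ω * ε q.1 q.2 ω) := by
    intro ω
    rw [hf1, hf2]
    rw [Finset.sum_mul_sum]
    exact Finset.sum_congr rfl fun p _ => Finset.sum_congr rfl fun q _ => by ring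
  rw [integral_congr_ae (Filter.Eventually.of_forall hptwise)]
  rw [integral_finset_sum T₁ (fun p hp => integrable_finset_sum T₂ (fun q hq =>
    ((hprodint p q (hmemT₁ p hp).1 (hmemT₁ p hp).2 (hmemT₂ q hq).1 (hmemT₂ q hq).2).const_mul
      (a p * b q))))]
  have hrowsum : ∀ p ∈ T₁, ∫ ω, ∑ q ∈ T₂, (a p * b q) * (ε p.1 p.2 ω * ε q.1 q.2 ω) ∂P =
      if p ∈ T₂ then a p * b p else 0 := by
    intro p hp
    rw [integral_finset_sum T₂ (fun q hq =>
      ((hprodint p q (hmemT₁ p hp).1 (hmemT₁ p hp).2 (hmemT₂ q hq).1 (hmemT₂ q hq).2).const_mul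
        (a p * b q)))]
    have : ∀ q ∈ T₂, ∫ ω, (a p * b q) * (ε p.1 p.2 ω * ε q.1 q.2 ω) ∂P =
        if p = q then a p * b q else 0 := by
      intro q hq
      rw [integral_const_mul,
        hεε p q (hmemT₁ p hp).1 (hmemT₁ p hp).2 (hmemT₂ q hq).1 (hmemT₂ q hq).2]
      by_cases h : p = q
      · rw [if_pos h, if_pos h, mul_one]
      · rw [if_neg h, if_neg h, mul_zero]
    rw [Finset.sum_congr rfl this, Finset.sum_ite_eq T₂ p (fun q => a p * b q)]
  rw [Finset.sum_congr rfl hrowsum, Finset.sum_ite_mem T₁ T₂ (fun p => a p * b p)]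
  have hinter : T₁ ∩ T₂ = (Finset.Icc 1 (min k₁ k₂)) ×ˢ (Finset.Icc 1 (min ℓ₁ ℓ₂)) := by
    ext ⟨i, j⟩
    simp only [hT₁, hT₂, Finset.mem_inter, Finset.mem_product, Finset.mem_Icc]
    omega
  rw [hinter, Finset.sum_product]
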